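/- Assume a_X > b_X > 0 and a_Y + b_Y = 0, and let T_I = b_Y/ln(a_X/b_X). Then: (i) if 0 < T_y < T_I, then T_X(x) < 0 for x ∈ (1/2, 1), T_X(x) > 0 for x ∈ (0, 1/2), and T_X'(x) > 0 for x ∈ (0, 1/2); (ii) if T_y > T_I, then T_X(x) < 0 for x ∈ (0, 1/2), T_X(x) > 0 for x ∈ (1/2, 1), and T_X'(x) < 0 for x ∈ (1/2, 1). -/

import Mathlib

open Real Filter Set Topology

/-- QRE response of the second player. -/
noncomputable def qreY (aY bY Ty : ℝ) (x : ℝ) : ℝ :=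
  (1 + Real.exp ((bY - (aY + bY) * x) / Ty))⁻¹

/-- QRE temperature curve for the first player. -/
noncomputable def qreTX (aX bX aY bY Ty : ℝ) (x : ℝ) : ℝ :=
  (bX - (aX + bX) * qreY aY bY Ty x) / Real.log (1 / x - 1)

/-- The auxiliary function L(x) = y(x) + x(1-x) ln(1/x-1) y'(x). -/
noncomputable def qreL (aY bY Ty : ℝ) (x : ℝ) : ℝ :=
  qreY aY bY Ty x + x * (1 - x) * Real.log (1 / x - 1) * deriv (qreY aY bY Ty) x

lemma deriv_const_div_log (K : ℝ) {x : ℝ} (hx0 : 0 < x) (hx1 : x < 1) (hxh : x ≠ 1/2) :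
    deriv (fun t => K / Real.log (1/t - 1)) x
      = K / (x * (1 - x) * (Real.log (1/x - 1))^2) := by
  have hxne : x ≠ 0 := hx0.ne'
  have h1x : (0:ℝ) < 1 - x := by linarith
  have hu : (0:ℝ) < 1/x - 1 := by
    rw [lt_sub_iff_add_lt, zero_add, lt_div_iff₀ hx0]; linarith
  have hune1 : 1/x - 1 ≠ 1 := by
    intro h
    apply hxh
    field_simp at h
    linarith
  have hlogne : Real.log (1/x - 1) ≠ 0 := by
    intro h
    rcases Real.log_eq_zero.mp h with h | h | h
    · exact hu.ne' h
    · exact hune1 h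
    · linarith
  have hf : HasDerivAt (fun t : ℝ => 1/t - 1) (-(x^2)⁻¹) x := by
    simpa [one_div] using (hasDerivAt_inv hxne).sub_const 1
  have hlog : HasDerivAt (fun t : ℝ => Real.log (1/t - 1)) (-(x^2)⁻¹ / (1/x - 1)) x :=
    hf.log hu.ne'
  have hdiv : HasDerivAt (fun t => K / Real.log (1/t - 1))
      ((0 * Real.log (1/x - 1) - K * (-(x^2)⁻¹ / (1/x - 1))) / (Real.log (1/x - 1))^2) x :=
    (hasDerivAt_const x K).div hlog hlogne
  rw [hdiv.deriv]
  generalize Real.log (1/x - 1) = L at hlogne ⊢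
  field_simp
  ring
theorem stmt_16 (aX bX aY bY Ty : ℝ) (hTy : 0 < Ty)
    (hab : aX > bX) (hbX : bX > 0) (hY : aY + bY = 0) :
    (Ty < bY / Real.log (aX / bX) →
      (∀ x ∈ Set.Ioo (1/2 : ℝ) 1, qreTX aX bX aY bY Ty x < 0) ∧
      (∀ x ∈ Set.Ioo (0:ℝ) (1/2), 0 < qreTX aX bX aY bY Ty x) ∧
      (∀ x ∈ Set.Ioo (0:ℝ) (1/2), 0 < deriv (qreTX aX bX aY bY Ty) x)) ∧
    (Ty > bY / Real.log (aX / bX) →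
      (∀ x ∈ Set.Ioo (0:ℝ) (1/2), qreTX aX bX aY bY Ty x < 0) ∧
      (∀ x ∈ Set.Ioo (1/2 : ℝ) 1, 0 < qreTX aX bX aY bY Ty x) ∧
      (∀ x ∈ Set.Ioo (1/2 : ℝ) 1, deriv (qreTX aX bX aY bY Ty) x < 0)) := by
  -- constant y
  set c : ℝ := (1 + Real.exp (bY / Ty))⁻¹ with hc
  have hyconst : ∀ t : ℝ, qreY aY bY Ty t = c := by
    intro t; simp [qreY, hY, hc]
  set K : ℝ := bX - (aX + bX) * c with hK
  have hTXfun : qreTX aX bX aY bY Ty = fun t => K / Real.log (1/t - 1) := by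
    funext t; simp only [qreTX, hyconst, hK]
  have hL : 0 < Real.log (aX / bX) := by
    apply Real.log_pos
    rw [lt_div_iff₀ hbX]; linarith
  have hexp : Real.exp (Real.log (aX/bX)) = aX / bX :=
    Real.exp_log (div_pos (by linarith) hbX)
  have habX : 0 < aX + bX := by linarith
  have hcpos : 0 < c := by positivity
  -- sign lemmas for log(1/x-1)
  have hlogpos : ∀ x ∈ Set.Ioo (0:ℝ) (1/2), 0 < Real.log (1/x - 1) := by
    intro x ⟨hx0, hx1⟩
    apply Real.log_pos
    rw [lt_sub_iff_add_lt, lt_div_iff₀ hx0]; linarith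
  have hlogneg : ∀ x ∈ Set.Ioo (1/2 : ℝ) 1, Real.log (1/x - 1) < 0 := by
    intro x ⟨hx0, hx1⟩
    have hx0' : (0:ℝ) < x := by linarith
    have hu : (0:ℝ) < 1/x - 1 := by
      rw [lt_sub_iff_add_lt, zero_add, lt_div_iff₀ hx0']; linarith
    apply Real.log_neg hu
    rw [sub_lt_iff_lt_add, div_lt_iff₀ hx0']; linarith
  constructor
  · intro hlt
    have hbY : 0 < bY := by
      by_contra h
      push_neg at h
      have : bY / Real.log (aX/bX) ≤ 0 := div_nonpos_of_nonpos_of_nonneg h hL.le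
      linarith
    have h1 : Real.log (aX/bX) < bY / Ty := by
      rw [lt_div_iff₀ hTy]
      have := (lt_div_iff₀ hL).mp hlt
      linarith
    have hexplt : aX / bX < Real.exp (bY / Ty) := by
      rw [← hexp]; exact Real.exp_lt_exp.mpr h1
    have hKpos : 0 < K := by
      have hden : (0:ℝ) < 1 + Real.exp (bY / Ty) := by positivity
      have : (aX + bX) / bX < 1 + Real.exp (bY / Ty) := by
        rw [add_div, div_self hbX.ne']; linarith [hexplt]
      have hclt : c < bX / (aX + bX) := by
        rw [hc, inv_lt_comm₀ (by positivity) (by positivity), inv_div]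
        exact this
      have := (mul_lt_mul_iff_right₀ habX).mpr hclt
      rw [mul_div_cancel₀ _ habX.ne'] at this
      rw [hK]; linarith
    refine ⟨?_, ?_, ?_⟩
    · intro x hx
      rw [hTXfun]
      exact div_neg_of_pos_of_neg hKpos (hlogneg x hx)
    · intro x hx
      rw [hTXfun]
      exact div_pos hKpos (hlogpos x hx)
    · intro x hx
      obtain ⟨hx0, hx1⟩ := hx
      rw [hTXfun, deriv_const_div_log K hx0 (by linarith) (by linarith)]
      apply div_pos hKpos
      have hLpos := hlogpos x ⟨hx0, hx1⟩
      have hLne : Real.log (1/x - 1) ≠ 0 := hLpos.ne'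
      have h1x : (0:ℝ) < 1 - x := by linarith
      positivity
  · intro hgt
    have h1 : bY / Ty < Real.log (aX/bX) := by
      rw [div_lt_iff₀ hTy]
      have := (div_lt_iff₀ hL).mp hgt
      linarith
    have hexplt : Real.exp (bY / Ty) < aX / bX := by
      rw [← hexp]; exact Real.exp_lt_exp.mpr h1
    have hKneg : K < 0 := by
      have hden : (0:ℝ) < 1 + Real.exp (bY / Ty) := by positivity
      have : 1 + Real.exp (bY / Ty) < (aX + bX) / bX := by
        rw [add_div, div_self hbX.ne']; linarith [hexplt]
      have hclt : bX / (aX + bX) < c := by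
        rw [hc, lt_inv_comm₀ (by positivity) hden, inv_div]
        exact this
      have := (mul_lt_mul_iff_right₀ habX).mpr hclt
      rw [mul_div_cancel₀ _ habX.ne'] at this
      rw [hK]; linarith
    refine ⟨?_, ?_, ?_⟩
    · intro x hx
      rw [hTXfun]
      exact div_neg_of_neg_of_pos hKneg (hlogpos x hx)
    · intro x hx
      rw [hTXfun]
      exact div_pos_of_neg_of_neg hKneg (hlogneg x hx)
    · intro x hx
      obtain ⟨hx0, hx1⟩ := hx
      rw [hTXfun, deriv_const_div_log K (by linarith) hx1 (by linarith)]
      apply div_neg_of_neg_of_pos hKneg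
      have hLneg := hlogneg x ⟨hx0, hx1⟩
      have hLne : Real.log (1/x - 1) ≠ 0 := hLneg.ne
      have h1x : (0:ℝ) < 1 - x := by linarith
      have hx0' : (0:ℝ) < x := by linarith
      positivity
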